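/- Let h(x) = x e^{−x} for x ≥ 0. Fix x ∈ (0, 2) and define G_x : [0, ∞) → ℝ by G_x(y) = (h(y) − h(x))/(y − x) for y ≠ x and G_x(x) = (1 − x)e^{−x}. Then for each m ∈ (0, 1), the supremum δ(x) := sup_{y ≥ m} |G_x(y)| is attained (i.e., it is a maximum over [m, ∞)) and satisfies δ(x) < e^{−x}. -/

import Mathlib

open Real Set

private lemma phi_mono {x : ℝ} (hx2 : x < 2) :
    StrictMono (fun t : ℝ => t * (1 + Real.exp (x - t))) := by
  have hderiv : ∀ t : ℝ, HasDerivAt (fun t : ℝ => t * (1 + Real.exp (x - t)))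
      (1 + (1 - t) * Real.exp (x - t)) t := by
    intro t
    have h1 : HasDerivAt (fun t : ℝ => x - t) (-1) t := by
      simpa using (hasDerivAt_id' t).const_sub x
    have h2 : HasDerivAt (fun t : ℝ => 1 + Real.exp (x - t)) (Real.exp (x - t) * (-1)) t :=
      (h1.exp).const_add 1
    have h3 : HasDerivAt (fun t : ℝ => t * (1 + Real.exp (x - t))) _ t := (hasDerivAt_id' t).mul h2
    convert h3 using 1
    ring
  apply strictMono_of_deriv_pos
  intro t
  rw [(hderiv t).deriv]
  have h1 : t - 1 ≤ Real.exp (t - 2) := by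
    have := Real.add_one_le_exp (t - 2); linarith
  have h2 : (t - 1) * Real.exp (x - t) ≤ Real.exp (t - 2) * Real.exp (x - t) :=
    mul_le_mul_of_nonneg_right h1 (Real.exp_pos _).le
  have h3 : Real.exp (t - 2) * Real.exp (x - t) = Real.exp (x - 2) := by
    rw [← Real.exp_add]; ring_nf
  have h4 : Real.exp (x - 2) < 1 := Real.exp_lt_one_iff.mpr (by linarith)
  nlinarith

private lemma pointwise_bound {x : ℝ} (hx : x ∈ Set.Ioo (0:ℝ) 2) {y : ℝ} (hy : 0 < y) :
    |if y = x then (1 - x) * Real.exp (-x)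
      else (y * Real.exp (-y) - x * Real.exp (-x)) / (y - x)| < Real.exp (-x) := by
  obtain ⟨hx0, hx2⟩ := hx
  by_cases h : y = x
  · rw [if_pos h, abs_mul, abs_of_pos (Real.exp_pos _)]
    have h1 : |1 - x| < 1 := abs_lt.mpr ⟨by linarith, by linarith⟩
    nlinarith [Real.exp_pos (-x), abs_nonneg (1 - x)]
  · rw [if_neg h, abs_div]
    rw [div_lt_iff₀ (abs_pos.mpr (sub_ne_zero.mpr h))]
    have hE : Real.exp (x - y) * Real.exp (-x) = Real.exp (-y) := by
      rw [← Real.exp_add]; ring_nf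
    have hEx := Real.exp_pos (-x)
    have key : |y * Real.exp (x - y) - x| < |y - x| := by
      rcases lt_or_gt_of_ne h with hlt | hgt
      · -- y < x
        have hu : 1 < Real.exp (x - y) := Real.one_lt_exp_iff.mpr (by linarith)
        have hphi : y * (1 + Real.exp (x - y)) < x * (1 + Real.exp (x - x)) :=
          phi_mono hx2 hlt
        rw [sub_self, Real.exp_zero] at hphi
        rw [abs_of_neg (by linarith : y - x < 0), abs_lt]
        constructor
        · nlinarith
        · nlinarith
      · -- y > x
        have hu : Real.exp (x - y) < 1 := Real.exp_lt_one_iff.mpr (by linarith)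
        have hphi : x * (1 + Real.exp (x - x)) < y * (1 + Real.exp (x - y)) :=
          phi_mono hx2 hgt
        rw [sub_self, Real.exp_zero] at hphi
        rw [abs_of_pos (by linarith : (0:ℝ) < y - x), abs_lt]
        constructor
        · nlinarith
        · nlinarith [Real.exp_pos (x - y)]
    calc |y * Real.exp (-y) - x * Real.exp (-x)|
        = |y * Real.exp (x - y) - x| * Real.exp (-x) := by
          rw [← abs_of_pos hEx, ← abs_mul]
          congr 1
          rw [sub_mul, mul_assoc, hE]
          rw [abs_of_pos hEx]
      _ < |y - x| * Real.exp (-x) := mul_lt_mul_of_pos_right key hEx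
      _ = Real.exp (-x) * |y - x| := mul_comm _ _

private lemma cont_G (x : ℝ) :
    Continuous (fun y : ℝ => if y = x then (1 - x) * Real.exp (-x)
      else (y * Real.exp (-y) - x * Real.exp (-x)) / (y - x)) := by
  have hupdate : (fun y : ℝ => if y = x then (1 - x) * Real.exp (-x)
      else (y * Real.exp (-y) - x * Real.exp (-x)) / (y - x))
      = Function.update (fun y : ℝ => (y * Real.exp (-y) - x * Real.exp (-x)) / (y - x)) x
          ((1 - x) * Real.exp (-x)) := by
    funext y; rw [Function.update_apply]
  rw [continuous_iff_continuousAt]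
  intro y
  by_cases hyx : y = x
  · subst hyx
    rw [hupdate, continuousAt_update_same]
    have hd : HasDerivAt (fun t : ℝ => t * Real.exp (-t)) ((1 - y) * Real.exp (-y)) y := by
      have h1 : HasDerivAt (fun t : ℝ => Real.exp (-t)) (Real.exp (-y) * (-1)) y := by
        exact ((hasDerivAt_id y).neg).exp
      have h2 : HasDerivAt (fun t : ℝ => t * Real.exp (-t)) _ y := (hasDerivAt_id' y).mul h1
      convert h2 using 1
      ring
    have ht := hasDerivAt_iff_tendsto_slope.mp hd
    refine Filter.Tendsto.congr (fun z => ?_) ht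
    rw [slope_def_field]
  · have hc : ContinuousAt (fun z : ℝ =>
        (z * Real.exp (-z) - x * Real.exp (-x)) / (z - x)) y := by
      apply ContinuousAt.div
      · fun_prop
      · fun_prop
      · exact sub_ne_zero.mpr hyx
    apply hc.congr
    filter_upwards [isOpen_ne.mem_nhds hyx] with z hz
    rw [if_neg hz]

private lemma self_mul_exp_neg_le_one {t : ℝ} (ht : 0 ≤ t) : t * Real.exp (-t) ≤ 1 := by
  have h1 : t + 1 ≤ Real.exp t := Real.add_one_le_exp t
  have h2 : Real.exp (-t) * Real.exp t = 1 := by rw [← Real.exp_add]; simp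
  nlinarith [Real.exp_pos (-t), Real.exp_pos t,
    mul_le_mul_of_nonneg_left h1 (Real.exp_pos (-t)).le]

/-- For `h(x) = x e^{-x}`, `x ∈ (0,2)` and the difference quotient `G_x` based at `x`,
for each `m ∈ (0,1)` the supremum `δ(x) = max_{y ≥ m} |G_x(y)|` is attained and
satisfies `δ(x) < e^{-x}`. -/
theorem stmt12
    (x : ℝ) (hx : x ∈ Set.Ioo (0 : ℝ) 2) (m : ℝ) (hm : m ∈ Set.Ioo (0 : ℝ) 1) :
    ∃ δ : ℝ,
      IsGreatest ((fun y => |if y = x then (1 - x) * Real.exp (-x)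
          else (y * Real.exp (-y) - x * Real.exp (-x)) / (y - x)|) '' Set.Ici m) δ
      ∧ δ < Real.exp (-x) := by
  obtain ⟨hx0, hx2⟩ := hx
  obtain ⟨hm0, hm1⟩ := hm
  set F : ℝ → ℝ := fun y => |if y = x then (1 - x) * Real.exp (-x)
      else (y * Real.exp (-y) - x * Real.exp (-x)) / (y - x)| with hF
  have hcont : Continuous F := (cont_G x).abs
  -- h(x+4) > h(x+5)
  have h45 : (x+5) * Real.exp (-(x+5)) < (x+4) * Real.exp (-(x+4)) := by
    have hE : Real.exp (-(x+5)) = Real.exp (-(x+4)) * Real.exp (-1) := by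
      rw [← Real.exp_add]; ring_nf
    have he : 2 ≤ Real.exp 1 := by have := Real.add_one_le_exp 1; linarith
    have hh : Real.exp (-1) * Real.exp 1 = 1 := by rw [← Real.exp_add]; simp
    have hinv : Real.exp (-1) ≤ 1/2 := by nlinarith [Real.exp_pos (-1)]
    rw [hE]
    have hstep : (x+5) * Real.exp (-1) ≤ (x+5) * (1/2) :=
      mul_le_mul_of_nonneg_left hinv (by linarith)
    nlinarith [Real.exp_pos (-(x+4)), Real.exp_pos (-1),
      mul_le_mul_of_nonneg_left (le_trans hstep (by linarith : (x+5)*(1/2) ≤ x+4))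
        (Real.exp_pos (-(x+4))).le]
  -- positivity of s
  have hFpos : ∀ y : ℝ, y ≠ x → y * Real.exp (-y) ≠ x * Real.exp (-x) → 0 < F y := by
    intro y hyx hne
    rw [hF]
    simp only [if_neg hyx]
    apply abs_pos.mpr
    exact div_ne_zero (sub_ne_zero.mpr hne) (sub_ne_zero.mpr hyx)
  set s := max (F (x+4)) (F (x+5)) with hsdef
  have hs : 0 < s := by
    rcases eq_or_ne ((x+4) * Real.exp (-(x+4))) (x * Real.exp (-x)) with h4 | h4
    · refine lt_max_of_lt_right (hFpos (x+5) (by intro hc; linarith [hc]) ?_)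
      intro hc
      exact absurd (hc.trans h4.symm) (ne_of_lt h45)
    · exact lt_max_of_lt_left (hFpos (x+4) (by intro hc; linarith [hc]) h4)
  set R := max (x + 5) (x + 1/s) with hRdef
  have hx5R : x + 5 ≤ R := le_max_left _ _
  have hmR : m ≤ R := by
    have : m ≤ x + 5 := by linarith
    linarith [hx5R]
  obtain ⟨y₀, hy₀mem, hy₀max⟩ := (isCompact_Icc : IsCompact (Icc m R)).exists_isMaxOn
      (nonempty_Icc.mpr hmR) hcont.continuousOn
  have hs_le : s ≤ F y₀ := by
    have h4mem : x + 4 ∈ Icc m R := ⟨by linarith, by linarith⟩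
    have h5mem : x + 5 ∈ Icc m R := ⟨by linarith, hx5R⟩
    exact max_le (hy₀max h4mem) (hy₀max h5mem)
  have htail : ∀ y : ℝ, R < y → F y ≤ s := by
    intro y hy
    have hxR : x + 1/s ≤ R := le_max_right _ _
    have h1spos : 0 < 1/s := by positivity
    have hxy : x < y := by linarith
    have hne : y ≠ x := ne_of_gt hxy
    have hy0 : (0:ℝ) ≤ y := by linarith
    have hnum : |y * Real.exp (-y) - x * Real.exp (-x)| ≤ 1 := by
      have ha := self_mul_exp_neg_le_one hy0
      have hb := self_mul_exp_neg_le_one (le_of_lt hx0)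
      have ha0 : 0 ≤ y * Real.exp (-y) := by positivity
      have hb0 : 0 ≤ x * Real.exp (-x) := by positivity
      rw [abs_le]
      constructor <;> linarith
    have hFy : F y = |y * Real.exp (-y) - x * Real.exp (-x)| / (y - x) := by
      rw [hF]
      simp only [if_neg hne]
      rw [abs_div, abs_of_pos (by linarith : (0:ℝ) < y - x)]
    rw [hFy]
    have hstep : |y * Real.exp (-y) - x * Real.exp (-x)| / (y - x) ≤ 1 / (y - x) := by
      gcongr
    refine le_trans hstep ?_
    rw [div_le_iff₀ (by linarith : (0:ℝ) < y - x)]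
    have hss : s * (1/s) = 1 := by field_simp
    nlinarith [mul_le_mul_of_nonneg_left (by linarith : 1/s ≤ y - x) hs.le]
  refine ⟨F y₀, ⟨⟨y₀, hy₀mem.1, rfl⟩, ?_⟩, ?_⟩
  · rintro z ⟨y, hy, rfl⟩
    rcases le_or_gt y R with hle | hlt
    · exact hy₀max ⟨hy, hle⟩
    · exact le_trans (htail y hlt) hs_le
  · exact pointwise_bound ⟨hx0, hx2⟩ (lt_of_lt_of_le hm0 hy₀mem.1)
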